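/- For integers k ≥ 2 and m, n ≥ 1, tilings of an m×n×k cuboid by k×k×1 bricks are in bijection with tilings of an m×n rectangle by k×1 and k×k tiles, via projection onto the m×n face: each k×1 tile is the projection of a single brick and each k×k tile is the projection of a stack of k bricks. -/
import Mathlib


/-- The cells of an `m × n` rectangle: `(row, column)` with `row < m`, `column < n`. -/
def grid (m n : ℕ) : Finset (ℕ × ℕ) := Finset.range m ×ˢ Finset.range n

/-- A horizontal `k × 1` tile: `k` consecutive cells in one row. -/
def IsHTile (k : ℕ) (t : Finset (ℕ × ℕ)) : Prop :=
  ∃ i j : ℕ, t = (Finset.range k).image fun s => (i, j + s)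

/-- A vertical `k × 1` tile: `k` consecutive cells in one column. -/
def IsVTile (k : ℕ) (t : Finset (ℕ × ℕ)) : Prop :=
  ∃ i j : ℕ, t = (Finset.range k).image fun s => (i + s, j)

/-- A tiling of the `m × n` rectangle by `k × 1` tiles. -/
def IsTiling (m n k : ℕ) (T : Finset (Finset (ℕ × ℕ))) : Prop :=
  (∀ t ∈ T, IsHTile k t ∨ IsVTile k t) ∧
  (T : Set (Finset (ℕ × ℕ))).PairwiseDisjoint id ∧
  T.biUnion id = grid m n

/-- The number of tilings of the `m × n` rectangle by `k × 1` tiles. -/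
noncomputable def numTilings (m n k : ℕ) : ℕ :=
  Nat.card {T : Finset (Finset (ℕ × ℕ)) // IsTiling m n k T}

/-- The tiling `T` has a fault at `x = a`: every tile lies entirely in
columns `< a` or entirely in columns `≥ a`. -/
def HasFaultAt (T : Finset (Finset (ℕ × ℕ))) (a : ℕ) : Prop :=
  ∀ t ∈ T, (∀ c ∈ t, c.2 < a) ∨ (∀ c ∈ t, a ≤ c.2)

/-- A tiling of a rectangle with `n` columns is fault-free. -/
def FaultFree (n : ℕ) (T : Finset (Finset (ℕ × ℕ))) : Prop :=
  ∀ a : ℕ, 0 < a → a < n → ¬ HasFaultAt T a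

/-- The number of fault-free tilings of the `m × n` rectangle by `k × 1` tiles. -/
noncomputable def numFFTilings (m n k : ℕ) : ℕ :=
  Nat.card {T : Finset (Finset (ℕ × ℕ)) // IsTiling m n k T ∧ FaultFree n T}

/-- A `k × k` square tile. -/
def IsSqTile (k : ℕ) (t : Finset (ℕ × ℕ)) : Prop :=
  ∃ i j : ℕ, t = (Finset.range k ×ˢ Finset.range k).image fun p => (i + p.1, j + p.2)

/-- A tiling of the `m × n` rectangle by `k × 1` and `k × k` tiles. -/
def IsTiling' (m n k : ℕ) (T : Finset (Finset (ℕ × ℕ))) : Prop :=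
  (∀ t ∈ T, IsHTile k t ∨ IsVTile k t ∨ IsSqTile k t) ∧
  (T : Set (Finset (ℕ × ℕ))).PairwiseDisjoint id ∧
  T.biUnion id = grid m n

/-- The number of fault-free tilings of the `m × n` rectangle by `k × 1` and `k × k` tiles. -/
noncomputable def numFFTilings' (m n k : ℕ) : ℕ :=
  Nat.card {T : Finset (Finset (ℕ × ℕ)) // IsTiling' m n k T ∧ FaultFree n T}

/-- The cells of an `m × n × k` cuboid. -/
def grid3 (m n k : ℕ) : Finset (ℕ × ℕ × ℕ) :=
  Finset.range m ×ˢ Finset.range n ×ˢ Finset.range k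

/-- A `k × k × 1` brick of extent `1` in the first coordinate. -/
def IsBrick1 (k : ℕ) (t : Finset (ℕ × ℕ × ℕ)) : Prop :=
  ∃ i j c : ℕ, t = (Finset.range k ×ˢ Finset.range k).image fun p => (i, j + p.1, c + p.2)

/-- A `k × k × 1` brick of extent `1` in the second coordinate. -/
def IsBrick2 (k : ℕ) (t : Finset (ℕ × ℕ × ℕ)) : Prop :=
  ∃ i j c : ℕ, t = (Finset.range k ×ˢ Finset.range k).image fun p => (i + p.1, j, c + p.2)

/-- A `k × k × 1` brick of extent `1` in the third coordinate. -/
def IsBrick3 (k : ℕ) (t : Finset (ℕ × ℕ × ℕ)) : Prop :=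
  ∃ i j c : ℕ, t = (Finset.range k ×ˢ Finset.range k).image fun p => (i + p.1, j + p.2, c)

/-- A tiling of the `m × n × k` cuboid by `k × k × 1` bricks. -/
def IsCuboidTiling (m n k : ℕ) (T : Finset (Finset (ℕ × ℕ × ℕ))) : Prop :=
  (∀ t ∈ T, IsBrick1 k t ∨ IsBrick2 k t ∨ IsBrick3 k t) ∧
  (T : Set (Finset (ℕ × ℕ × ℕ))).PairwiseDisjoint id ∧
  T.biUnion id = grid3 m n k

/-- Project a cuboid tiling onto the `m × n` face: each brick is sent to its
shadow in the first two coordinates. -/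
def projTiling (T : Finset (Finset (ℕ × ℕ × ℕ))) : Finset (Finset (ℕ × ℕ)) :=
  T.image fun t => t.image fun c => (c.1, c.2.1)

namespace Aux

def projT (t : Finset (ℕ × ℕ × ℕ)) : Finset (ℕ × ℕ) := t.image fun c => (c.1, c.2.1)
def colOver (k : ℕ) (t : Finset (ℕ × ℕ)) : Finset (ℕ × ℕ × ℕ) :=
  t.biUnion fun p => (Finset.range k).image fun z => (p.1, p.2, z)
def levelCopy (t : Finset (ℕ × ℕ)) (c : ℕ) : Finset (ℕ × ℕ × ℕ) :=
  t.image fun p => (p.1, p.2, c)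
def sqT (k i j : ℕ) : Finset (ℕ × ℕ) :=
  (Finset.range k ×ˢ Finset.range k).image fun p => (i + p.1, j + p.2)
def hTl (k i j : ℕ) : Finset (ℕ × ℕ) := (Finset.range k).image fun s => (i, j + s)
def vTl (k i j : ℕ) : Finset (ℕ × ℕ) := (Finset.range k).image fun s => (i + s, j)

-- membership lemmas
lemma mem_grid3 {m n k x y z : ℕ} : (x, y, z) ∈ grid3 m n k ↔ x < m ∧ y < n ∧ z < k := by
  simp [grid3]

lemma mem_grid {m n x y : ℕ} : (x, y) ∈ grid m n ↔ x < m ∧ y < n := by simp [grid]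

lemma mem_hTl {k i j x y : ℕ} : (x, y) ∈ hTl k i j ↔ x = i ∧ j ≤ y ∧ y < j + k := by
  simp only [hTl, Finset.mem_image, Finset.mem_range, Prod.ext_iff]
  constructor
  · rintro ⟨s, hs, h1, h2⟩; omega
  · rintro ⟨rfl, h1, h2⟩; exact ⟨y - j, by omega, by omega⟩

lemma mem_vTl {k i j x y : ℕ} : (x, y) ∈ vTl k i j ↔ y = j ∧ i ≤ x ∧ x < i + k := by
  simp only [vTl, Finset.mem_image, Finset.mem_range, Prod.ext_iff]
  constructor
  · rintro ⟨s, hs, h1, h2⟩; omega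
  · rintro ⟨rfl, h1, h2⟩; exact ⟨x - i, by omega, by omega⟩

lemma mem_sqT {k i j x y : ℕ} :
    (x, y) ∈ sqT k i j ↔ i ≤ x ∧ x < i + k ∧ j ≤ y ∧ y < j + k := by
  simp only [sqT, Finset.mem_image, Finset.mem_product, Finset.mem_range, Prod.ext_iff]
  constructor
  · rintro ⟨⟨a, b⟩, ⟨ha, hb⟩, h1, h2⟩; simp at h1 h2; omega
  · rintro ⟨h1, h2, h3, h4⟩
    exact ⟨(x - i, y - j), ⟨by omega, by omega⟩, by simp; omega, by simp; omega⟩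

lemma mem_colOver {k : ℕ} {t : Finset (ℕ × ℕ)} {x y z : ℕ} :
    (x, y, z) ∈ colOver k t ↔ (x, y) ∈ t ∧ z < k := by
  simp only [colOver, Finset.mem_biUnion, Finset.mem_image, Finset.mem_range]
  constructor
  · rintro ⟨p, hp, z', hz', h⟩
    obtain ⟨rfl, rfl, rfl⟩ : p.1 = x ∧ p.2 = y ∧ z' = z := by
      rw [Prod.ext_iff, Prod.ext_iff] at h; exact ⟨h.1, h.2.1, h.2.2⟩
    exact ⟨hp, hz'⟩
  · rintro ⟨h, hz⟩; exact ⟨(x, y), h, z, hz, rfl⟩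

lemma mem_levelCopy {t : Finset (ℕ × ℕ)} {c x y z : ℕ} :
    (x, y, z) ∈ levelCopy t c ↔ (x, y) ∈ t ∧ z = c := by
  simp only [levelCopy, Finset.mem_image, Prod.ext_iff]
  constructor
  · rintro ⟨p, hp, h1, h2, h3⟩; subst h1; subst h2; exact ⟨hp, h3.symm⟩
  · rintro ⟨h, rfl⟩; exact ⟨(x, y), h, rfl, rfl, rfl⟩

lemma mem_brick1 {k i j c x y z : ℕ} :
    (x, y, z) ∈ ((Finset.range k ×ˢ Finset.range k).image fun p : ℕ × ℕ => (i, j + p.1, c + p.2))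
      ↔ x = i ∧ j ≤ y ∧ y < j + k ∧ c ≤ z ∧ z < c + k := by
  simp only [Finset.mem_image, Finset.mem_product, Finset.mem_range, Prod.ext_iff]
  constructor
  · rintro ⟨⟨a, b⟩, ⟨ha, hb⟩, h1, h2, h3⟩; simp at h1 h2 h3; omega
  · rintro ⟨rfl, h1, h2, h3, h4⟩
    exact ⟨(y - j, z - c), ⟨by omega, by omega⟩, rfl, by simp; omega, by simp; omega⟩

lemma mem_brick2 {k i j c x y z : ℕ} :
    (x, y, z) ∈ ((Finset.range k ×ˢ Finset.range k).image fun p : ℕ × ℕ => (i + p.1, j, c + p.2))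
      ↔ y = j ∧ i ≤ x ∧ x < i + k ∧ c ≤ z ∧ z < c + k := by
  simp only [Finset.mem_image, Finset.mem_product, Finset.mem_range, Prod.ext_iff]
  constructor
  · rintro ⟨⟨a, b⟩, ⟨ha, hb⟩, h1, h2, h3⟩; simp at h1 h2 h3; omega
  · rintro ⟨rfl, h1, h2, h3, h4⟩
    exact ⟨(x - i, z - c), ⟨by omega, by omega⟩, by simp; omega, rfl, by simp; omega⟩

lemma mem_brick3 {k i j c x y z : ℕ} :
    (x, y, z) ∈ ((Finset.range k ×ˢ Finset.range k).image fun p : ℕ × ℕ => (i + p.1, j + p.2, c))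
      ↔ z = c ∧ i ≤ x ∧ x < i + k ∧ j ≤ y ∧ y < j + k := by
  simp only [Finset.mem_image, Finset.mem_product, Finset.mem_range, Prod.ext_iff]
  constructor
  · rintro ⟨⟨a, b⟩, ⟨ha, hb⟩, h1, h2, h3⟩; simp at h1 h2 h3; omega
  · rintro ⟨rfl, h1, h2, h3, h4⟩
    exact ⟨(x - i, y - j), ⟨by omega, by omega⟩, by simp; omega, by simp; omega, rfl⟩

lemma card_hTl {k i j : ℕ} : (hTl k i j).card = k := by
  rw [hTl, Finset.card_image_of_injective _ (fun a b h => by simpa [Prod.ext_iff] using h)]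
  exact Finset.card_range k

lemma card_vTl {k i j : ℕ} : (vTl k i j).card = k := by
  rw [vTl, Finset.card_image_of_injective _ (fun a b h => by simpa [Prod.ext_iff] using h)]
  exact Finset.card_range k

lemma card_sqT {k i j : ℕ} : (sqT k i j).card = k * k := by
  rw [sqT, Finset.card_image_of_injective _ (fun a b h => by simpa [Prod.ext_iff] using h)]
  simp [Finset.card_product]

lemma projT_levelCopy (t : Finset (ℕ × ℕ)) (c : ℕ) : projT (levelCopy t c) = t := by
  unfold projT levelCopy
  rw [Finset.image_image]
  exact Finset.image_id

lemma projT_colOver {k : ℕ} (hk : 0 < k) (t : Finset (ℕ × ℕ)) : projT (colOver k t) = t := by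
  ext ⟨x, y⟩
  simp only [projT, Finset.mem_image]
  constructor
  · rintro ⟨⟨a, b, z⟩, hm, h⟩
    obtain ⟨rfl, rfl⟩ : a = x ∧ b = y := by
      rw [Prod.ext_iff] at h; exact ⟨h.1, h.2⟩
    exact (mem_colOver.1 hm).1
  · intro h; exact ⟨(x, y, 0), mem_colOver.2 ⟨h, hk⟩, rfl⟩

lemma mem_projT {t : Finset (ℕ × ℕ × ℕ)} {x y : ℕ} :
    (x, y) ∈ projT t ↔ ∃ z, (x, y, z) ∈ t := by
  simp only [projT, Finset.mem_image]
  constructor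
  · rintro ⟨⟨a, b, z⟩, hm, h⟩
    obtain ⟨rfl, rfl⟩ : a = x ∧ b = y := by rw [Prod.ext_iff] at h; exact ⟨h.1, h.2⟩
    exact ⟨z, hm⟩
  · rintro ⟨z, hz⟩; exact ⟨(x, y, z), hz, rfl⟩

lemma eq_levelCopy_of_constZ {b : Finset (ℕ × ℕ × ℕ)} {c : ℕ}
    (h : ∀ p ∈ b, p.2.2 = c) : b = levelCopy (projT b) c := by
  ext ⟨x, y, z⟩
  rw [mem_levelCopy, mem_projT]
  constructor
  · intro hx; exact ⟨⟨z, hx⟩, h _ hx⟩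
  · rintro ⟨⟨z', hz'⟩, rfl⟩
    have h2 := h _ hz'
    simp only at h2
    exact h2 ▸ hz'

/-- The shape classification of bricks in a cuboid tiling. -/
lemma shape {m n k : ℕ} (hk : 2 ≤ k) {T : Finset (Finset (ℕ × ℕ × ℕ))}
    (hcT : IsCuboidTiling m n k T) {b : Finset (ℕ × ℕ × ℕ)} (hb : b ∈ T) :
    (b = colOver k (projT b) ∧ (IsHTile k (projT b) ∨ IsVTile k (projT b))
      ∧ (projT b).card = k)
    ∨ (∃ c, c < k ∧ b = levelCopy (projT b) c ∧ IsSqTile k (projT b)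
      ∧ (projT b).card = k * k) := by
  have hsub : b ⊆ grid3 m n k := by
    rw [← hcT.2.2]; exact Finset.subset_biUnion_of_mem id hb
  have hk0 : 0 < k := by omega
  rcases hcT.1 b hb with ⟨i, j, c, rfl⟩ | ⟨i, j, c, rfl⟩ | ⟨i, j, c, rfl⟩
  · -- Brick1
    have hc : c = 0 := by
      have hm := (mem_brick1 (k := k) (i := i) (j := j) (c := c) (x := i) (y := j) (z := c + (k - 1)).2) ⟨rfl, le_refl _, by omega, by omega, by omega⟩
      have := mem_grid3.1 (hsub hm)
      omega
    subst hc
    have hproj : projT ((Finset.range k ×ˢ Finset.range k).image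
        fun p : ℕ × ℕ => (i, j + p.1, 0 + p.2)) = hTl k i j := by
      ext ⟨x, y⟩
      rw [mem_projT, mem_hTl]
      constructor
      · rintro ⟨z, hz⟩
        have := mem_brick1.1 hz
        omega
      · rintro ⟨rfl, h1, h2⟩
        exact ⟨0, mem_brick1.2 ⟨rfl, h1, h2, by omega, by omega⟩⟩
    rw [hproj]
    refine Or.inl ⟨?_, Or.inl ⟨i, j, rfl⟩, card_hTl⟩
    ext ⟨x, y, z⟩
    rw [mem_brick1, mem_colOver, mem_hTl]
    omega
  · -- Brick2
    have hc : c = 0 := by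
      have hm := (mem_brick2 (k := k) (i := i) (j := j) (c := c) (x := i) (y := j) (z := c + (k - 1)).2) ⟨rfl, le_refl _, by omega, by omega, by omega⟩
      have := mem_grid3.1 (hsub hm)
      omega
    subst hc
    have hproj : projT ((Finset.range k ×ˢ Finset.range k).image
        fun p : ℕ × ℕ => (i + p.1, j, 0 + p.2)) = vTl k i j := by
      ext ⟨x, y⟩
      rw [mem_projT, mem_vTl]
      constructor
      · rintro ⟨z, hz⟩
        have := mem_brick2.1 hz
        omega
      · rintro ⟨rfl, h1, h2⟩
        exact ⟨0, mem_brick2.2 ⟨rfl, h1, h2, by omega, by omega⟩⟩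
    rw [hproj]
    refine Or.inl ⟨?_, Or.inr ⟨i, j, rfl⟩, card_vTl⟩
    ext ⟨x, y, z⟩
    rw [mem_brick2, mem_colOver, mem_vTl]
    omega
  · -- Brick3
    have hck : c < k := by
      have hm := (mem_brick3 (k := k) (i := i) (j := j) (c := c) (x := i) (y := j) (z := c)).2 ⟨rfl, le_refl _, by omega, le_refl _, by omega⟩
      exact (mem_grid3.1 (hsub hm)).2.2
    have hproj : projT ((Finset.range k ×ˢ Finset.range k).image
        fun p : ℕ × ℕ => (i + p.1, j + p.2, c)) = sqT k i j := by
      ext ⟨x, y⟩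
      rw [mem_projT, mem_sqT]
      constructor
      · rintro ⟨z, hz⟩
        have := mem_brick3.1 hz
        omega
      · rintro ⟨h1, h2, h3, h4⟩
        exact ⟨c, mem_brick3.2 ⟨rfl, h1, h2, h3, h4⟩⟩
    rw [hproj]
    refine Or.inr ⟨c, hck, ?_, ⟨i, j, rfl⟩, card_sqT⟩
    ext ⟨x, y, z⟩
    rw [mem_brick3, mem_levelCopy, mem_sqT]
    omega

lemma exists_lexmin (U : Finset (ℕ × ℕ)) (h : U.Nonempty) :
    ∃ p ∈ U, ∀ q ∈ U, p.1 ≤ q.1 ∧ (q.1 = p.1 → p.2 ≤ q.2) := by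
  have h1 : (U.image Prod.fst).Nonempty := h.image _
  set i0 := (U.image Prod.fst).min' h1 with hi0
  have hF : (U.filter fun p => p.1 = i0).Nonempty := by
    obtain ⟨i, hi⟩ := Finset.mem_image.1 ((U.image Prod.fst).min'_mem h1)
    exact ⟨i, Finset.mem_filter.2 ⟨hi.1, hi.2⟩⟩
  have h2 : ((U.filter fun p => p.1 = i0).image Prod.snd).Nonempty := hF.image _
  set j0 := ((U.filter fun p => p.1 = i0).image Prod.snd).min' h2 with hj0
  obtain ⟨p, hp, hp2⟩ := Finset.mem_image.1 (Finset.min'_mem _ h2)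
  have hp' := Finset.mem_filter.1 hp
  refine ⟨(i0, j0), ?_, ?_⟩
  · have : p = (i0, j0) := Prod.ext hp'.2 hp2
    exact this ▸ hp'.1
  · intro q hq
    constructor
    · exact Finset.min'_le _ _ (Finset.mem_image_of_mem _ hq)
    · intro hq1
      exact Finset.min'_le _ _ (Finset.mem_image_of_mem _
        (Finset.mem_filter.2 ⟨hq, hq1⟩))

lemma corner_of_min {k : ℕ} {t : Finset (ℕ × ℕ)} {i0 j0 : ℕ}
    (ht : IsSqTile k t) (hmem : (i0, j0) ∈ t)
    (hmin : ∀ q ∈ t, i0 ≤ q.1 ∧ (q.1 = i0 → j0 ≤ q.2)) : t = sqT k i0 j0 := by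
  obtain ⟨i, j, rfl⟩ := ht
  have hm : i ≤ i0 ∧ i0 < i + k ∧ j ≤ j0 ∧ j0 < j + k := mem_sqT.1 hmem
  have hk : 0 < k := by omega
  have hc : (i, j) ∈ sqT k i j := mem_sqT.2 ⟨le_refl _, by omega, le_refl _, by omega⟩
  have h1 := hmin (i, j) hc
  have hi : i = i0 := le_antisymm hm.1 h1.1
  have hj : j = j0 := le_antisymm hm.2.2.1 (h1.2 hi)
  rw [hi, hj]; rfl

lemma biUnion_erase {S : Finset (Finset (ℕ × ℕ))} {s : Finset (ℕ × ℕ)}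
    (d : (S : Set (Finset (ℕ × ℕ))).PairwiseDisjoint id) (hs : s ∈ S) :
    (S.erase s).biUnion id = S.biUnion id \ s := by
  ext x
  simp only [Finset.mem_biUnion, Finset.mem_sdiff, Finset.mem_erase, id]
  constructor
  · rintro ⟨t, ⟨hts, htS⟩, hxt⟩
    refine ⟨⟨t, htS, hxt⟩, fun hxs => ?_⟩
    exact Finset.disjoint_left.1 (d htS hs hts) hxt hxs
  · rintro ⟨⟨t, htS, hxt⟩, hxs⟩
    refine ⟨t, ⟨fun h => hxs (h ▸ hxt), htS⟩, hxt⟩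

lemma sq_tiling_unique {k : ℕ} (hk : 0 < k) :
    ∀ N (S1 S2 : Finset (Finset (ℕ × ℕ))), S1.card ≤ N →
    (∀ t ∈ S1, IsSqTile k t) → (∀ t ∈ S2, IsSqTile k t) →
    (S1 : Set (Finset (ℕ × ℕ))).PairwiseDisjoint id →
    (S2 : Set (Finset (ℕ × ℕ))).PairwiseDisjoint id →
    S1.biUnion id = S2.biUnion id → S1 = S2 := by
  intro N
  induction N with
  | zero =>
    intro S1 S2 hc h1 h2 d1 d2 hu
    have hS1 : S1 = ∅ := Finset.card_eq_zero.1 (Nat.le_zero.1 hc)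
    subst hS1
    by_contra h
    obtain ⟨t, ht⟩ := (Finset.nonempty_iff_ne_empty.2 (fun h' => h h'.symm))
    obtain ⟨i, j, rfl⟩ := h2 t ht
    have : (i, j) ∈ S2.biUnion id := Finset.mem_biUnion.2 ⟨_, ht,
      mem_sqT.2 ⟨le_refl _, by omega, le_refl _, by omega⟩⟩
    rw [← hu] at this
    simp at this
  | succ N ih =>
    intro S1 S2 hc h1 h2 d1 d2 hu
    rcases Finset.eq_empty_or_nonempty S1 with rfl | ⟨t0, ht0⟩
    · by_contra h
      obtain ⟨t, ht⟩ := (Finset.nonempty_iff_ne_empty.2 (fun h' => h h'.symm))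
      obtain ⟨i, j, rfl⟩ := h2 t ht
      have : (i, j) ∈ S2.biUnion id := Finset.mem_biUnion.2 ⟨_, ht,
        mem_sqT.2 ⟨le_refl _, by omega, le_refl _, by omega⟩⟩
      rw [← hu] at this
      simp at this
    · have hUne : (S1.biUnion id).Nonempty := by
        obtain ⟨i, j, rfl⟩ := h1 t0 ht0
        exact ⟨(i, j), Finset.mem_biUnion.2 ⟨_, ht0,
          mem_sqT.2 ⟨le_refl _, by omega, le_refl _, by omega⟩⟩⟩
      obtain ⟨⟨i0, j0⟩, hpU, hmin⟩ := exists_lexmin _ hUne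
      -- the square with corner (i0,j0) is in both S1 and S2
      obtain ⟨t1, ht1, hxt1⟩ := Finset.mem_biUnion.1 hpU
      obtain ⟨t2, ht2, hxt2⟩ := Finset.mem_biUnion.1 (hu ▸ hpU)
      have e1 : t1 = sqT k i0 j0 := corner_of_min (h1 t1 ht1) hxt1
        (fun q hq => hmin q (Finset.mem_biUnion.2 ⟨t1, ht1, hq⟩))
      have e2 : t2 = sqT k i0 j0 := corner_of_min (h2 t2 ht2) hxt2
        (fun q hq => hmin q (hu ▸ Finset.mem_biUnion.2 ⟨t2, ht2, hq⟩))
      have ht1' : sqT k i0 j0 ∈ S1 := e1 ▸ ht1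
      have ht2' : sqT k i0 j0 ∈ S2 := e2 ▸ ht2
      set s := sqT k i0 j0 with hs
      have key : S1.erase s = S2.erase s := by
        refine ih (S1.erase s) (S2.erase s) ?_
          (fun t ht => h1 t (Finset.mem_of_mem_erase ht))
          (fun t ht => h2 t (Finset.mem_of_mem_erase ht))
          (d1.subset (by simp [Finset.erase_subset]))
          (d2.subset (by simp [Finset.erase_subset]))
          ?_
        · have := Finset.card_erase_of_mem ht1'
          omega
        · rw [biUnion_erase d1 ht1', biUnion_erase d2 ht2', hu]
      calc S1 = insert s (S1.erase s) := (Finset.insert_erase ht1').symm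
        _ = insert s (S2.erase s) := by rw [key]
        _ = S2 := Finset.insert_erase ht2'

def levelSet (T : Finset (Finset (ℕ × ℕ × ℕ))) (c : ℕ) : Finset (Finset (ℕ × ℕ)) :=
  (T.filter fun b => ∀ p ∈ b, p.2.2 = c).image projT

lemma mem_levelSet {T : Finset (Finset (ℕ × ℕ × ℕ))} {c : ℕ} {t : Finset (ℕ × ℕ)} :
    t ∈ levelSet T c ↔ ∃ b ∈ T, (∀ p ∈ b, p.2.2 = c) ∧ projT b = t := by
  simp only [levelSet, Finset.mem_image, Finset.mem_filter]
  constructor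
  · rintro ⟨b, ⟨hb, hz⟩, h⟩; exact ⟨b, hb, hz, h⟩
  · rintro ⟨b, hb, hz, h⟩; exact ⟨b, ⟨hb, hz⟩, h⟩

lemma cell_unique {m n k : ℕ} {T : Finset (Finset (ℕ × ℕ × ℕ))}
    (hcT : IsCuboidTiling m n k T) {b1 b2 : Finset (ℕ × ℕ × ℕ)}
    (h1 : b1 ∈ T) (h2 : b2 ∈ T) {x : ℕ × ℕ × ℕ} (hx1 : x ∈ b1) (hx2 : x ∈ b2) :
    b1 = b2 := by
  by_contra hne
  exact Finset.disjoint_left.1 (hcT.2.1 h1 h2 hne) hx1 hx2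

lemma constZ_of_levelCopy {t : Finset (ℕ × ℕ)} {c : ℕ} :
    ∀ p ∈ levelCopy t c, p.2.2 = c := by
  rintro ⟨x, y, z⟩ hp
  exact (mem_levelCopy.1 hp).2

lemma levelSet_sq {m n k : ℕ} (hk : 2 ≤ k) {T : Finset (Finset (ℕ × ℕ × ℕ))}
    (hcT : IsCuboidTiling m n k T) {c : ℕ} :
    ∀ t ∈ levelSet T c, IsSqTile k t := by
  intro t ht
  obtain ⟨b, hb, hz, rfl⟩ := mem_levelSet.1 ht
  rcases shape hk hcT hb with ⟨hcol, _, hcard⟩ | ⟨c', _, _, hsq, _⟩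
  · exfalso
    have hne : (projT b).Nonempty := Finset.card_pos.1 (by omega)
    obtain ⟨⟨x, y⟩, hxy⟩ := hne
    have h0 : (x, y, 0) ∈ b := hcol ▸ mem_colOver.2 ⟨hxy, by omega⟩
    have h1 : (x, y, 1) ∈ b := hcol ▸ mem_colOver.2 ⟨hxy, by omega⟩
    have e0 := hz _ h0
    have e1 := hz _ h1
    simp only at e0 e1
    omega
  · exact hsq

lemma levelSet_disjoint {m n k : ℕ} {T : Finset (Finset (ℕ × ℕ × ℕ))}
    (hcT : IsCuboidTiling m n k T) {c : ℕ} :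
    ((levelSet T c : Finset (Finset (ℕ × ℕ))) : Set (Finset (ℕ × ℕ))).PairwiseDisjoint id := by
  intro t1 ht1 t2 ht2 hne
  obtain ⟨b1, hb1, hz1, rfl⟩ := mem_levelSet.1 ht1
  obtain ⟨b2, hb2, hz2, rfl⟩ := mem_levelSet.1 ht2
  simp only [Function.onFun, id_eq]
  rw [Finset.disjoint_left]
  rintro ⟨x, y⟩ hx1 hx2
  obtain ⟨z1, hz1'⟩ := mem_projT.1 hx1
  obtain ⟨z2, hz2'⟩ := mem_projT.1 hx2
  have e1 : z1 = c := hz1 _ hz1'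
  have e2 : z2 = c := hz2 _ hz2'
  subst e1; subst e2
  exact hne (cell_unique hcT hb1 hb2 hz1' hz2' ▸ rfl)

lemma union_level_subset {m n k : ℕ} (hk : 2 ≤ k) {T : Finset (Finset (ℕ × ℕ × ℕ))}
    (hcT : IsCuboidTiling m n k T) {c c' : ℕ} (hc' : c' < k) :
    (levelSet T c).biUnion id ⊆ (levelSet T c').biUnion id := by
  rintro ⟨x, y⟩ h
  obtain ⟨t, ht, hxt⟩ := Finset.mem_biUnion.1 h
  obtain ⟨b, hb, hz, rfl⟩ := mem_levelSet.1 ht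
  obtain ⟨z0, hz0⟩ := mem_projT.1 hxt
  have ezc : z0 = c := hz _ hz0
  subst ezc
  have hsub : b ⊆ grid3 m n k := by
    rw [← hcT.2.2]; exact Finset.subset_biUnion_of_mem id hb
  have hg := mem_grid3.1 (hsub hz0)
  have hcell : (x, y, c') ∈ grid3 m n k := mem_grid3.2 ⟨hg.1, hg.2.1, hc'⟩
  rw [← hcT.2.2] at hcell
  obtain ⟨b', hb', hxb'⟩ := Finset.mem_biUnion.1 hcell
  rcases shape hk hcT hb' with ⟨hcol, _, _⟩ | ⟨c'', _, hlc, _, _⟩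
  · exfalso
    rw [hcol] at hxb'
    have hpp := (mem_colOver.1 hxb').1
    have hcb' : (x, y, z0) ∈ b' := hcol ▸ mem_colOver.2 ⟨hpp, hg.2.2⟩
    have hbe : b = b' := cell_unique hcT hb hb' hz0 hcb'
    subst hbe
    have h0 : (x, y, 0) ∈ b := hcol ▸ mem_colOver.2 ⟨hpp, by omega⟩
    have h1 : (x, y, 1) ∈ b := hcol ▸ mem_colOver.2 ⟨hpp, by omega⟩
    have e0 := hz _ h0
    have e1 := hz _ h1
    simp only at e0 e1
    omega
  · rw [hlc] at hxb'
    obtain ⟨hpp, hcc⟩ := mem_levelCopy.1 hxb'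
    subst hcc
    refine Finset.mem_biUnion.2 ⟨projT b', mem_levelSet.2 ⟨b', hb', ?_, rfl⟩, hpp⟩
    rw [hlc]
    exact constZ_of_levelCopy

lemma levelSet_eq {m n k : ℕ} (hk : 2 ≤ k) {T : Finset (Finset (ℕ × ℕ × ℕ))}
    (hcT : IsCuboidTiling m n k T) {c c' : ℕ} (hc : c < k) (hc' : c' < k) :
    levelSet T c = levelSet T c' := by
  have hk0 : 0 < k := by omega
  refine sq_tiling_unique hk0 (levelSet T c).card _ _ le_rfl
    (levelSet_sq hk hcT) (levelSet_sq hk hcT)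
    (levelSet_disjoint hcT) (levelSet_disjoint hcT) ?_
  exact Finset.Subset.antisymm (union_level_subset hk hcT hc')
    (union_level_subset hk hcT hc)

/-- level alignment: if a brick at level c is in T, its copy at any level c' is too -/
lemma alignment {m n k : ℕ} (hk : 2 ≤ k) {T : Finset (Finset (ℕ × ℕ × ℕ))}
    (hcT : IsCuboidTiling m n k T) {b : Finset (ℕ × ℕ × ℕ)} (hb : b ∈ T)
    {c : ℕ} (hz : ∀ p ∈ b, p.2.2 = c) (hne : b.Nonempty) {c' : ℕ} (hc' : c' < k) :
    levelCopy (projT b) c' ∈ T := by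
  obtain ⟨⟨x, y, z0⟩, hx⟩ := hne
  have ezc : z0 = c := hz _ hx
  subst ezc
  have hsub : b ⊆ grid3 m n k := by
    rw [← hcT.2.2]; exact Finset.subset_biUnion_of_mem id hb
  have hc : z0 < k := (mem_grid3.1 (hsub hx)).2.2
  have h1 : projT b ∈ levelSet T z0 := mem_levelSet.2 ⟨b, hb, hz, rfl⟩
  rw [levelSet_eq hk hcT hc hc'] at h1
  obtain ⟨b', hb', hz', hproj⟩ := mem_levelSet.1 h1
  have : b' = levelCopy (projT b) c' := by
    rw [← hproj]; exact eq_levelCopy_of_constZ hz'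
  exact this ▸ hb'

def liftTile (k : ℕ) (t : Finset (ℕ × ℕ)) : Finset (Finset (ℕ × ℕ × ℕ)) :=
  if t.card = k then {colOver k t} else (Finset.range k).image (levelCopy t)

def liftT (k : ℕ) (T' : Finset (Finset (ℕ × ℕ))) : Finset (Finset (ℕ × ℕ × ℕ)) :=
  T'.biUnion (liftTile k)

lemma mem_liftTile {k : ℕ} {t : Finset (ℕ × ℕ)} {b : Finset (ℕ × ℕ × ℕ)} :
    b ∈ liftTile k t ↔
      (t.card = k ∧ b = colOver k t) ∨ (t.card ≠ k ∧ ∃ c, c < k ∧ b = levelCopy t c) := by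
  unfold liftTile
  split
  · rename_i h
    simp only [Finset.mem_singleton]
    constructor
    · intro hb; exact Or.inl ⟨h, hb⟩
    · rintro (⟨_, hb⟩ | ⟨hne, _⟩)
      · exact hb
      · exact absurd h hne
  · rename_i h
    simp only [Finset.mem_image, Finset.mem_range]
    constructor
    · rintro ⟨c, hc, rfl⟩; exact Or.inr ⟨h, c, hc, rfl⟩
    · rintro (⟨hc, _⟩ | ⟨_, c, hc, rfl⟩)
      · exact absurd hc h
      · exact ⟨c, hc, rfl⟩

lemma sqcard_ne {k : ℕ} (hk : 2 ≤ k) : k * k ≠ k := by nlinarith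

lemma proj_mem_of_mem_liftTile {k : ℕ} {t : Finset (ℕ × ℕ)} {b : Finset (ℕ × ℕ × ℕ)}
    (hb : b ∈ liftTile k t) : ∀ p ∈ b, (p.1, p.2.1) ∈ t := by
  rintro ⟨x, y, z⟩ hp
  rcases mem_liftTile.1 hb with ⟨_, rfl⟩ | ⟨_, c, _, rfl⟩
  · exact (mem_colOver.1 hp).1
  · exact (mem_levelCopy.1 hp).1

lemma colOver_hTl {k i j : ℕ} :
    colOver k (hTl k i j)
      = (Finset.range k ×ˢ Finset.range k).image fun p : ℕ × ℕ => (i, j + p.1, 0 + p.2) := by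
  ext ⟨x, y, z⟩
  rw [mem_colOver, mem_hTl, mem_brick1]
  omega

lemma colOver_vTl {k i j : ℕ} :
    colOver k (vTl k i j)
      = (Finset.range k ×ˢ Finset.range k).image fun p : ℕ × ℕ => (i + p.1, j, 0 + p.2) := by
  ext ⟨x, y, z⟩
  rw [mem_colOver, mem_vTl, mem_brick2]
  omega

lemma levelCopy_sqT {k i j c : ℕ} :
    levelCopy (sqT k i j) c
      = (Finset.range k ×ˢ Finset.range k).image fun p : ℕ × ℕ => (i + p.1, j + p.2, c) := by
  ext ⟨x, y, z⟩
  rw [mem_levelCopy, mem_sqT, mem_brick3]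
  omega

/-- (A) projection of a cuboid tiling is a tiling by k×1 and k×k tiles -/
lemma proj_isTiling' {m n k : ℕ} (hk : 2 ≤ k) {T : Finset (Finset (ℕ × ℕ × ℕ))}
    (hcT : IsCuboidTiling m n k T) : IsTiling' m n k (T.image projT) := by
  have hk0 : 0 < k := by omega
  refine ⟨?_, ?_, ?_⟩
  · intro t ht
    obtain ⟨b, hb, rfl⟩ := Finset.mem_image.1 ht
    rcases shape hk hcT hb with ⟨_, hv, _⟩ | ⟨_, _, _, hsq, _⟩
    · rcases hv with hh | hv
      · exact Or.inl hh
      · exact Or.inr (Or.inl hv)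
    · exact Or.inr (Or.inr hsq)
  · intro t1 ht1 t2 ht2 hne
    simp only [Finset.coe_image, Set.mem_image, Finset.mem_coe] at ht1 ht2
    obtain ⟨b1, hb1, rfl⟩ := ht1
    obtain ⟨b2, hb2, rfl⟩ := ht2
    simp only [Function.onFun, id_eq]
    rw [Finset.disjoint_left]
    rintro ⟨x, y⟩ hx1 hx2
    apply hne
    obtain ⟨z1, hz1⟩ := mem_projT.1 hx1
    obtain ⟨z2, hz2⟩ := mem_projT.1 hx2
    have hsub1 : b1 ⊆ grid3 m n k := by
      rw [← hcT.2.2]; exact Finset.subset_biUnion_of_mem id hb1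
    have hsub2 : b2 ⊆ grid3 m n k := by
      rw [← hcT.2.2]; exact Finset.subset_biUnion_of_mem id hb2
    have hzk1 : z1 < k := (mem_grid3.1 (hsub1 hz1)).2.2
    have hzk2 : z2 < k := (mem_grid3.1 (hsub2 hz2)).2.2
    rcases shape hk hcT hb1 with ⟨hcol1, _, _⟩ | ⟨c1, hc1, hlc1, _, hcard1⟩
    · -- b1 full column: contains (x,y,z2), so b1 = b2
      have : (x, y, z2) ∈ b1 := hcol1 ▸ mem_colOver.2 ⟨hx1, hzk2⟩
      rw [cell_unique hcT hb1 hb2 this hz2]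
    · rcases shape hk hcT hb2 with ⟨hcol2, _, _⟩ | ⟨c2, hc2, hlc2, _, hcard2⟩
      · have : (x, y, z1) ∈ b2 := hcol2 ▸ mem_colOver.2 ⟨hx2, hzk1⟩
        rw [cell_unique hcT hb1 hb2 hz1 this]
      · -- both level copies; use alignment
        have hb1ne : b1.Nonempty := ⟨_, hz1⟩
        have hz1' : ∀ p ∈ b1, p.2.2 = c1 := by
          rw [hlc1]; exact constZ_of_levelCopy
        have halign : levelCopy (projT b1) c2 ∈ T := alignment hk hcT hb1 hz1' hb1ne hc2
        have hm1 : (x, y, c2) ∈ levelCopy (projT b1) c2 := mem_levelCopy.2 ⟨hx1, rfl⟩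
        have hm2 : (x, y, c2) ∈ b2 := by
          have e2 : z2 = c2 := by
            have := constZ_of_levelCopy (t := projT b2) (c := c2) _ (hlc2 ▸ hz2)
            simpa using this
          exact e2 ▸ hz2
        have := cell_unique hcT halign hb2 hm1 hm2
        rw [← this, projT_levelCopy]
  · ext ⟨x, y⟩
    rw [mem_grid]
    simp only [Finset.mem_biUnion, Finset.mem_image, id_eq]
    constructor
    · rintro ⟨t, ⟨b, hb, rfl⟩, hx⟩
      obtain ⟨z, hz⟩ := mem_projT.1 hx
      have hsub : b ⊆ grid3 m n k := by
        rw [← hcT.2.2]; exact Finset.subset_biUnion_of_mem id hb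
      have := mem_grid3.1 (hsub hz)
      exact ⟨this.1, this.2.1⟩
    · rintro ⟨hx, hy⟩
      have : (x, y, 0) ∈ grid3 m n k := mem_grid3.2 ⟨hx, hy, hk0⟩
      rw [← hcT.2.2] at this
      obtain ⟨b, hb, hxb⟩ := Finset.mem_biUnion.1 this
      exact ⟨projT b, ⟨b, hb, rfl⟩, mem_projT.2 ⟨0, hxb⟩⟩

/-- (C) lifting the projection recovers the cuboid tiling -/
lemma lift_proj {m n k : ℕ} (hk : 2 ≤ k) {T : Finset (Finset (ℕ × ℕ × ℕ))}
    (hcT : IsCuboidTiling m n k T) : liftT k (T.image projT) = T := by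
  ext b'
  simp only [liftT, Finset.mem_biUnion, Finset.mem_image]
  constructor
  · rintro ⟨t, ⟨b, hb, rfl⟩, hbt⟩
    rcases shape hk hcT hb with ⟨hcol, _, hcard⟩ | ⟨c, hc, hlc, _, hcard⟩
    · rcases mem_liftTile.1 hbt with ⟨_, rfl⟩ | ⟨hne, _⟩
      · exact hcol ▸ hb
      · exact absurd hcard hne
    · rcases mem_liftTile.1 hbt with ⟨hcc, _⟩ | ⟨_, c', hc', rfl⟩
      · exact absurd hcc (hcard ▸ sqcard_ne hk)
      · have hz : ∀ p ∈ b, p.2.2 = c := by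
          rw [hlc]; exact constZ_of_levelCopy
        have hbne : b.Nonempty := by
          rw [hlc, levelCopy]
          exact (Finset.card_pos.1 (by rw [hcard]; positivity)).image _
        exact alignment hk hcT hb hz hbne hc'
  · intro hb'
    refine ⟨projT b', ⟨b', hb', rfl⟩, ?_⟩
    rcases shape hk hcT hb' with ⟨hcol, _, hcard⟩ | ⟨c, hc, hlc, _, hcard⟩
    · exact mem_liftTile.2 (Or.inl ⟨hcard, hcol⟩)
    · exact mem_liftTile.2 (Or.inr ⟨hcard ▸ sqcard_ne hk, c, hc, hlc⟩)

/-- (B) the lift of a tiling is a cuboid tiling -/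
lemma lift_isCuboid {m n k : ℕ} (hk : 2 ≤ k) {T' : Finset (Finset (ℕ × ℕ))}
    (hT' : IsTiling' m n k T') : IsCuboidTiling m n k (liftT k T') := by
  have hk0 : 0 < k := by omega
  obtain ⟨htiles, hdis, hun⟩ := hT'
  refine ⟨?_, ?_, ?_⟩
  · intro b hb
    obtain ⟨t, ht, hbt⟩ := Finset.mem_biUnion.1 hb
    rcases htiles t ht with ⟨i, j, rfl⟩ | ⟨i, j, rfl⟩ | ⟨i, j, rfl⟩
    · have hcard : (hTl k i j).card = k := card_hTl
      rcases mem_liftTile.1 hbt with ⟨_, rfl⟩ | ⟨hne, _⟩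
      · exact Or.inl ⟨i, j, 0, colOver_hTl⟩
      · exact absurd hcard hne
    · have hcard : (vTl k i j).card = k := card_vTl
      rcases mem_liftTile.1 hbt with ⟨_, rfl⟩ | ⟨hne, _⟩
      · exact Or.inr (Or.inl ⟨i, j, 0, colOver_vTl⟩)
      · exact absurd hcard hne
    · have hcard : (sqT k i j).card = k * k := card_sqT
      rcases mem_liftTile.1 hbt with ⟨hcc, _⟩ | ⟨_, c, hc, rfl⟩
      · exact absurd hcc (hcard ▸ sqcard_ne hk)
      · exact Or.inr (Or.inr ⟨i, j, c, levelCopy_sqT⟩)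
  · intro b1 hb1 b2 hb2 hne
    rw [Finset.mem_coe, liftT, Finset.mem_biUnion] at hb1 hb2
    obtain ⟨t1, ht1, hbt1⟩ := hb1
    obtain ⟨t2, ht2, hbt2⟩ := hb2
    simp only [Function.onFun, id_eq]
    rw [Finset.disjoint_left]
    rintro ⟨x, y, z⟩ hx1 hx2
    by_cases htt : t1 = t2
    · subst htt
      rcases mem_liftTile.1 hbt1 with ⟨hc1, rfl⟩ | ⟨hc1, c1, hcc1, rfl⟩
      · rcases mem_liftTile.1 hbt2 with ⟨_, rfl⟩ | ⟨hc2, _⟩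
        · exact hne rfl
        · exact hc2 hc1
      · rcases mem_liftTile.1 hbt2 with ⟨hc2, _⟩ | ⟨_, c2, hcc2, rfl⟩
        · exact hc1 hc2
        · have e1 : z = c1 := (mem_levelCopy.1 hx1).2
          have e2 : z = c2 := (mem_levelCopy.1 hx2).2
          have : c1 = c2 := by omega
          exact hne (by rw [this])
    · have hd := hdis ht1 ht2 htt
      simp only [Function.onFun, id_eq] at hd
      have p1 : (x, y) ∈ t1 := proj_mem_of_mem_liftTile hbt1 _ hx1
      have p2 : (x, y) ∈ t2 := proj_mem_of_mem_liftTile hbt2 _ hx2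
      exact Finset.disjoint_left.1 hd p1 p2
  · ext ⟨x, y, z⟩
    rw [mem_grid3]
    simp only [Finset.mem_biUnion, id_eq]
    constructor
    · rintro ⟨b, hb, hxb⟩
      obtain ⟨t, ht, hbt⟩ := Finset.mem_biUnion.1 hb
      have hxy : (x, y) ∈ t := proj_mem_of_mem_liftTile hbt _ hxb
      have hg : (x, y) ∈ grid m n := by
        rw [← hun]; exact Finset.mem_biUnion.2 ⟨t, ht, hxy⟩
      have hzk : z < k := by
        rcases mem_liftTile.1 hbt with ⟨_, rfl⟩ | ⟨_, c, hc, rfl⟩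
        · exact (mem_colOver.1 hxb).2
        · exact (mem_levelCopy.1 hxb).2 ▸ hc
      exact ⟨(mem_grid.1 hg).1, (mem_grid.1 hg).2, hzk⟩
    · rintro ⟨hx, hy, hz⟩
      have hg : (x, y) ∈ grid m n := mem_grid.2 ⟨hx, hy⟩
      rw [← hun] at hg
      obtain ⟨t, ht, hxy⟩ := Finset.mem_biUnion.1 hg
      by_cases hcard : t.card = k
      · refine ⟨colOver k t, Finset.mem_biUnion.2 ⟨t, ht,
          mem_liftTile.2 (Or.inl ⟨hcard, rfl⟩)⟩, mem_colOver.2 ⟨hxy, hz⟩⟩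
      · refine ⟨levelCopy t z, Finset.mem_biUnion.2 ⟨t, ht,
          mem_liftTile.2 (Or.inr ⟨hcard, z, hz, rfl⟩)⟩, mem_levelCopy.2 ⟨hxy, rfl⟩⟩

/-- (D) projecting the lift recovers the tiling -/
lemma proj_lift {m n k : ℕ} (hk : 2 ≤ k) {T' : Finset (Finset (ℕ × ℕ))}
    (hT' : IsTiling' m n k T') : (liftT k T').image projT = T' := by
  have hk0 : 0 < k := by omega
  ext t
  simp only [Finset.mem_image]
  constructor
  · rintro ⟨b, hb, rfl⟩
    obtain ⟨t', ht', hbt⟩ := Finset.mem_biUnion.1 hb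
    rcases mem_liftTile.1 hbt with ⟨_, rfl⟩ | ⟨_, c, _, rfl⟩
    · rwa [projT_colOver hk0]
    · rwa [projT_levelCopy]
  · intro ht
    by_cases hcard : t.card = k
    · exact ⟨colOver k t, Finset.mem_biUnion.2 ⟨t, ht,
        mem_liftTile.2 (Or.inl ⟨hcard, rfl⟩)⟩, projT_colOver hk0 t⟩
    · exact ⟨levelCopy t 0, Finset.mem_biUnion.2 ⟨t, ht,
        mem_liftTile.2 (Or.inr ⟨hcard, 0, hk0, rfl⟩)⟩, projT_levelCopy t 0⟩

end Aux

theorem stmt_18 (m n k : ℕ) (hk : 2 ≤ k) (hm : 0 < m) (hn : 0 < n) :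
    ∃ e : {T : Finset (Finset (ℕ × ℕ × ℕ)) // IsCuboidTiling m n k T} ≃
        {T' : Finset (Finset (ℕ × ℕ)) // IsTiling' m n k T'},
      ∀ T, ((e T : {T' : Finset (Finset (ℕ × ℕ)) // IsTiling' m n k T'}) :
          Finset (Finset (ℕ × ℕ))) = projTiling (T : Finset (Finset (ℕ × ℕ × ℕ))) := by
  classical
  refine ⟨⟨fun T => ⟨projTiling T.1, by
      rw [show projTiling T.1 = T.1.image Aux.projT from rfl]
      exact Aux.proj_isTiling' hk T.2⟩,
    fun T' => ⟨Aux.liftT k T'.1, Aux.lift_isCuboid hk T'.2⟩,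
    fun T => Subtype.ext (by
      show Aux.liftT k (projTiling T.1) = T.1
      rw [show projTiling T.1 = T.1.image Aux.projT from rfl]
      exact Aux.lift_proj hk T.2),
    fun T' => Subtype.ext (by
      show projTiling (Aux.liftT k T'.1) = T'.1
      rw [show projTiling (Aux.liftT k T'.1) = (Aux.liftT k T'.1).image Aux.projT from rfl]
      exact Aux.proj_lift hk T'.2)⟩,
    fun T => rfl⟩
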